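/- If 𝒜 is an α-invariant C*-subalgebra of BUC(ℂⁿ) that contains a nonzero function from C₀(ℂⁿ), then C₀(ℂⁿ) ⊆ 𝒜. -/

import Mathlib

open MeasureTheory Complex Filter
open scoped ENNReal Topology

noncomputable section

/-- `ℂⁿ` -/
abbrev Cn (n : ℕ) := Fin n → ℂ

/-- squared Euclidean norm `|z|²` on `ℂⁿ` -/
def nsq {n : ℕ} (z : Cn n) : ℝ := ∑ i, ‖z i‖ ^ 2

/-- `z·w̄ = ∑ zᵢ w̄ᵢ` -/
def cdot {n : ℕ} (z w : Cn n) : ℂ := ∑ i, z i * (starRingEnd ℂ) (w i)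

/-- the Gaussian measure `dμ_t(z) = (πt)^{-n} e^{-|z|²/t} dV(z)` on `ℂⁿ` -/
def gaussian (n : ℕ) (t : ℝ) : Measure (Cn n) :=
  volume.withDensity (fun z => ENNReal.ofReal (((Real.pi * t) ^ n)⁻¹ * Real.exp (-nsq z / t)))

/-- the reproducing kernel `K_z^t(w) = e^{(w·z̄)/t}` -/
def Kfun {n : ℕ} (t : ℝ) (z w : Cn n) : ℂ := Complex.exp (cdot w z / t)

/-- the normalized reproducing kernel `k_z^t(w) = e^{(w·z̄)/t - |z|²/(2t)}` -/
def kfun {n : ℕ} (t : ℝ) (z w : Cn n) : ℂ :=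
  Complex.exp (cdot w z / t - (nsq z / (2 * t) : ℝ))

/-- the Weyl operator `(W_z f)(w) = k_z^t(w) f(w-z)` acting on functions -/
def weylFun {n : ℕ} (t : ℝ) (z : Cn n) (g : Cn n → ℂ) : Cn n → ℂ :=
  fun w => kfun t z w * g (w - z)

/-- the parity operator `(Uf)(w) = f(-w)` acting on functions -/
def parityFun {n : ℕ} (g : Cn n → ℂ) : Cn n → ℂ := fun w => g (-w)

lemma aux_shift_cocompact {n : ℕ} (z : Cn n) :
    Tendsto (fun w : Cn n => w - z) (cocompact (Cn n)) (cocompact (Cn n)) := by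
  apply tendsto_cocompact_of_tendsto_dist_comp_atTop (0 : Cn n)
  simp only [dist_zero_right]
  have h1 : Tendsto (fun w : Cn n => ‖w‖ - ‖z‖) (cocompact (Cn n)) atTop :=
    (tendsto_norm_cocompact_atTop).atTop_add tendsto_const_nhds
  exact tendsto_atTop_mono (fun w => by
    have := norm_sub_norm_le w z; linarith) h1

lemma aux_periodic_zero {n : ℕ} {f : Cn n → ℂ} (hf : Tendsto f (cocompact (Cn n)) (𝓝 0))
    {p : Cn n} (hp : p ≠ 0) (hper : ∀ u, f (u + p) = f u) : f = 0 := by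
  funext u
  have hiter : ∀ k : ℕ, f (u + k • p) = f u := by
    intro k; induction k with
    | zero => simp
    | succ k ih => rw [succ_nsmul, ← add_assoc, hper, ih]
  have hten : Tendsto (fun k : ℕ => u + k • p) atTop (cocompact (Cn n)) := by
    apply tendsto_cocompact_of_tendsto_dist_comp_atTop (0 : Cn n)
    simp only [dist_zero_right]
    have hp' : (0:ℝ) < ‖p‖ := norm_pos_iff.mpr hp
    have h1 : Tendsto (fun k : ℕ => (k : ℝ) * ‖p‖ - ‖u‖) atTop atTop :=
      (tendsto_natCast_atTop_atTop.atTop_mul_const hp').atTop_add tendsto_const_nhds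
    refine tendsto_atTop_mono (fun k => ?_) h1
    have h2 : ‖k • p‖ = (k : ℝ) * ‖p‖ := by
      rw [← Nat.cast_smul_eq_nsmul ℝ, norm_smul]; simp
    have h3 : ‖k • p‖ ≤ ‖u + k • p‖ + ‖u‖ := by
      have := norm_sub_le (u + k • p) u
      simpa using this
    linarith
  have h4 : Tendsto (fun _ : ℕ => f u) atTop (𝓝 0) := by
    have h5 := hf.comp hten
    have h6 : (f ∘ fun k : ℕ => u + k • p) = fun _ : ℕ => f u :=
      funext fun k => hiter k
    rwa [h6] at h5
  exact tendsto_nhds_unique tendsto_const_nhds h4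


/-- If `𝒜` is a translation-invariant C*-subalgebra of `BUC(ℂⁿ)`
containing a nonzero function from `C₀(ℂⁿ)`, then `C₀(ℂⁿ) ⊆ 𝒜`. -/
theorem C0_subset_of_invariant_Cstar_subalgebra (n : ℕ) (𝒜 : Set (Cn n → ℂ))
    (hBUC : ∀ f ∈ 𝒜, UniformContinuous f ∧ ∃ C, ∀ w, ‖f w‖ ≤ C)
    (hadd : ∀ f ∈ 𝒜, ∀ g ∈ 𝒜, f + g ∈ 𝒜)
    (hsmul : ∀ (c : ℂ), ∀ f ∈ 𝒜, c • f ∈ 𝒜)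
    (hmul : ∀ f ∈ 𝒜, ∀ g ∈ 𝒜, f * g ∈ 𝒜)
    (hstar : ∀ f ∈ 𝒜, (fun w => (starRingEnd ℂ) (f w)) ∈ 𝒜)
    (hclosed : ∀ f : Cn n → ℂ,
      (∀ ε > (0 : ℝ), ∃ g ∈ 𝒜, ∀ w, ‖f w - g w‖ ≤ ε) → f ∈ 𝒜)
    (hinv : ∀ f ∈ 𝒜, ∀ z : Cn n, (fun w => f (w - z)) ∈ 𝒜)
    (h0 : ∃ f ∈ 𝒜, f ≠ 0 ∧ Tendsto f (cocompact (Cn n)) (𝓝 0)) :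
    ∀ g : Cn n → ℂ, Continuous g → Tendsto g (cocompact (Cn n)) (𝓝 0) → g ∈ 𝒜 := by
  classical
  intro g hgc hg0
  obtain ⟨f₀, hf₀A, hf₀ne, hf₀0⟩ := h0
  -- the subset A0 = 𝒜 ∩ C₀
  set A0 : Set (Cn n → ℂ) :=
    {f | f ∈ 𝒜 ∧ Tendsto f (cocompact (Cn n)) (𝓝 0)} with hA0def
  have hzeroA : (0 : Cn n → ℂ) ∈ 𝒜 := by
    have := hsmul 0 f₀ hf₀A
    simpa [zero_smul] using this
  have hzeroA0 : (0 : Cn n → ℂ) ∈ A0 := ⟨hzeroA, tendsto_const_nhds⟩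
  have hcont : ∀ f ∈ 𝒜, Continuous f := fun f hf => (hBUC f hf).1.continuous
  -- translates of A0 members stay in A0
  have htransA0 : ∀ f ∈ A0, ∀ z : Cn n, (fun w => f (w - z)) ∈ A0 := by
    rintro f ⟨hfA, hf0⟩ z
    exact ⟨hinv f hfA z, hf0.comp (aux_shift_cocompact z)⟩
  -- a point where f₀ is nonzero
  obtain ⟨c, hc⟩ : ∃ c, f₀ c ≠ 0 := by
    by_contra h
    push_neg at h
    exact hf₀ne (funext fun w => h w)
  -- nonvanishing at any point
  have hpt : ∀ a : Cn n, ∃ f ∈ A0, f a ≠ 0 := by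
    intro a
    refine ⟨fun w => f₀ (w - (a - c)), htransA0 f₀ ⟨hf₀A, hf₀0⟩ (a - c), ?_⟩
    simpa using hc
  -- separation of distinct points
  have hsep2 : ∀ a b : Cn n, a ≠ b → ∃ f ∈ A0, f a ≠ f b := by
    intro a b hab
    by_contra h
    push_neg at h
    have hper : ∀ u, f₀ (u + (b - a)) = f₀ u := by
      intro u
      have := h (fun w => f₀ (w - (a - u))) (htransA0 f₀ ⟨hf₀A, hf₀0⟩ (a - u))
      have e1 : a - (a - u) = u := by abel
      have e2 : b - (a - u) = u + (b - a) := by abel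
      rw [e1, e2] at this
      exact this.symm
    exact hf₀ne (aux_periodic_zero hf₀0 (sub_ne_zero.mpr (Ne.symm hab)) hper)
  -- extension to the one-point compactification
  let OP := OnePoint (Cn n)
  have hcc : ∀ {f : Cn n → ℂ}, Tendsto f (cocompact (Cn n)) (𝓝 0) →
      Tendsto f (coclosedCompact (Cn n)) (𝓝 (0:ℂ)) := by
    intro f hf
    rwa [Filter.coclosedCompact_eq_cocompact]
  let E : ∀ f ∈ A0, C(OP, ℂ) := fun f hf =>
    OnePoint.continuousMapMk ⟨f, hcont f hf.1⟩ 0 (hcc hf.2)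
  have hE_coe : ∀ f hf (x : Cn n), E f hf x = f x := fun f hf x => rfl
  have hE_infty : ∀ f hf, E f hf (OnePoint.infty) = 0 := fun f hf => rfl
  -- the star subalgebra
  let B : StarSubalgebra ℂ C(OP, ℂ) :=
    { carrier := {F | ∃ f ∈ A0, ∀ x : Cn n, F x = F OnePoint.infty + f x}
      mul_mem' := by
        rintro F G ⟨f, hf, hFf⟩ ⟨g, hg, hGg⟩
        refine ⟨F OnePoint.infty • g + G OnePoint.infty • f + f * g,
          ⟨hadd _ (hadd _ (hsmul _ g hg.1) _ (hsmul _ f hf.1)) _ (hmul f hf.1 g hg.1),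
           ?_⟩, ?_⟩
        · have : Tendsto (F OnePoint.infty • g + G OnePoint.infty • f + f * g)
              (cocompact (Cn n)) (𝓝 (F OnePoint.infty • 0 + G OnePoint.infty • 0 + 0 * 0)) :=
            ((hg.2.const_smul _).add (hf.2.const_smul _)).add (hf.2.mul hg.2)
          simpa using this
        · intro x
          have := hFf x; have := hGg x
          simp only [ContinuousMap.mul_apply, Pi.add_apply, Pi.smul_apply, Pi.mul_apply,
            smul_eq_mul, hFf x, hGg x]
          ring
      add_mem' := by
        rintro F G ⟨f, hf, hFf⟩ ⟨g, hg, hGg⟩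
        refine ⟨f + g, ⟨hadd f hf.1 g hg.1, by have h := hf.2.add hg.2; rw [add_zero] at h; exact h⟩, ?_⟩
        intro x
        simp only [ContinuousMap.add_apply, Pi.add_apply, hFf x, hGg x]
        ring
      algebraMap_mem' := by
        intro c
        refine ⟨0, hzeroA0, ?_⟩
        intro x
        simp
      star_mem' := by
        rintro F ⟨f, hf, hFf⟩
        refine ⟨fun w => (starRingEnd ℂ) (f w), ⟨hstar f hf.1, ?_⟩, ?_⟩
        · have h := hf.2.star
          simp only [starRingEnd_apply]
          simpa using h
        · intro x
          simp only [ContinuousMap.star_apply, hFf x, starRingEnd_apply, star_add] }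
  have memB : ∀ f (hf : f ∈ A0), E f hf ∈ B := by
    intro f hf
    exact ⟨f, hf, fun x => by simp [hE_infty f hf, hE_coe f hf x]⟩
  have hsepB : B.SeparatesPoints := by
    intro x y hxy
    induction x using OnePoint.rec with
    | infty =>
      induction y using OnePoint.rec with
      | infty => exact absurd rfl hxy
      | coe b =>
        obtain ⟨f, hf, hfb⟩ := hpt b
        exact ⟨E f hf, ⟨E f hf, memB f hf, rfl⟩, by
          simpa [hE_infty f hf, hE_coe f hf b] using (Ne.symm hfb)⟩
    | coe a =>
      induction y using OnePoint.rec with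
      | infty =>
        obtain ⟨f, hf, hfa⟩ := hpt a
        exact ⟨E f hf, ⟨E f hf, memB f hf, rfl⟩, by
          simpa [hE_infty f hf, hE_coe f hf a] using hfa⟩
      | coe b =>
        have hab : a ≠ b := fun h => hxy (by rw [h])
        obtain ⟨f, hf, hfab⟩ := hsep2 a b hab
        exact ⟨E f hf, ⟨E f hf, memB f hf, rfl⟩, by
          simpa [hE_coe f hf a, hE_coe f hf b] using hfab⟩
  have hdense :=
    ContinuousMap.starSubalgebra_topologicalClosure_eq_top_of_separatesPoints B hsepB
  let G : C(OP, ℂ) := OnePoint.continuousMapMk ⟨g, hgc⟩ 0 (hcc hg0)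
  have hGmem : G ∈ closure (B : Set C(OP, ℂ)) := by
    have h1 : G ∈ B.topologicalClosure := by
      rw [hdense]; exact StarSubalgebra.mem_top
    exact h1
  apply hclosed
  intro ε hε
  obtain ⟨F, hFB, hdist⟩ := Metric.mem_closure_iff.mp hGmem (ε/2) (by linarith)
  obtain ⟨f, hfA0, hFf⟩ := hFB
  refine ⟨f, hfA0.1, fun w => ?_⟩
  have h1 : dist (G w) (F w) ≤ dist G F := ContinuousMap.dist_apply_le_dist _
  have h2 : dist (G OnePoint.infty) (F OnePoint.infty) ≤ dist G F :=
    ContinuousMap.dist_apply_le_dist _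
  have hGw : G (w : OP) = g w := rfl
  have hGi : G OnePoint.infty = 0 := rfl
  have hFw : F (w : OP) = F OnePoint.infty + f w := hFf w
  have key : ‖g w - f w‖ ≤ ‖G (w : OP) - F (w : OP)‖ + ‖F OnePoint.infty‖ := by
    rw [hGw] at *
    have : g w - f w = (g w - F (w : OP)) + F OnePoint.infty := by
      rw [hFw]; ring
    rw [this]
    exact norm_add_le _ _
  rw [dist_eq_norm] at h1 h2
  rw [hGw] at h1
  rw [hGi, zero_sub, norm_neg] at h2
  rw [hGw] at key
  linarith
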